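/- Let F and g be positive integers with the set B_Frob(F,g) nonempty, and let 1 ≤ k ≤ F - g. Over the uniform distribution on numerical semigroups S with Frobenius number F, genus g, and F < 2·m(S), the expected value of a_k(S) equals ⌊F/2⌋ + (⌊(F-1)/2⌋ + 1)·k/(F - g + 1). -/

import Mathlib

/-- A numerical semigroup: a subset of ℕ containing 0, closed under addition,
with finite complement. -/
def IsNumericalSemigroup (S : Set ℕ) : Prop :=
  0 ∈ S ∧ (∀ a ∈ S, ∀ b ∈ S, a + b ∈ S) ∧ Sᶜ.Finite

/-- The genus: number of gaps. -/
noncomputable def genus (S : Set ℕ) : ℕ := Sᶜ.ncard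

/-- The Frobenius number: the largest gap. -/
noncomputable def frob (S : Set ℕ) : ℕ := sSup Sᶜ

/-- `elt S k` is the k-th smallest nonzero element of `S` (1-indexed). -/
noncomputable def elt (S : Set ℕ) (k : ℕ) : ℕ :=
  Nat.nth (fun n => n ∈ S ∧ n ≠ 0) (k - 1)

/-- The multiplicity: the smallest nonzero element. -/
noncomputable def mult (S : Set ℕ) : ℕ := elt S 1

namespace Stmt11

attribute [local instance] Classical.propDecidable

/-- The semigroup associated to a finite set `B`. -/
def Phi (h F : ℕ) (B : Finset ℕ) : Set ℕ :=
  {n | n = 0 ∨ (∃ b ∈ B, n = h + b) ∨ F < n}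

lemma mem_Phi {h F n : ℕ} {B : Finset ℕ} :
    n ∈ Phi h F B ↔ n = 0 ∨ (∃ b ∈ B, n = h + b) ∨ F < n := Iff.rfl

variable {F : ℕ} {B : Finset ℕ}

lemma lb_of_mem (hB : B ⊆ Finset.Icc 1 ((F - 1) / 2)) {n : ℕ}
    (hn : n ∈ Phi (F / 2) F B) (h0 : n ≠ 0) : F / 2 + 1 ≤ n := by
  rcases hn with rfl | ⟨b, hb, rfl⟩ | h
  · exact absurd rfl h0
  · have := Finset.mem_Icc.1 (hB hb); omega
  · omega

lemma compl_Phi (hF : 1 ≤ F) (hB : B ⊆ Finset.Icc 1 ((F - 1) / 2)) :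
    (Phi (F / 2) F B)ᶜ = ↑(Finset.Icc 1 F \ B.image (F / 2 + ·)) := by
  ext n
  simp only [Set.mem_compl_iff, mem_Phi, Finset.coe_sdiff, Set.mem_diff, Finset.coe_Icc,
    Set.mem_Icc, Finset.coe_image, Set.mem_image, Finset.mem_coe]
  constructor
  · intro h
    push_neg at h
    obtain ⟨h1, h2, h3⟩ := h
    refine ⟨⟨by omega, by omega⟩, ?_⟩
    rintro ⟨b, hb, rfl⟩
    exact h2 b hb rfl
  · rintro ⟨⟨h1, h2⟩, h3⟩
    push_neg
    refine ⟨by omega, ?_, by omega⟩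
    rintro b hb rfl
    exact h3 ⟨b, hb, rfl⟩

lemma image_subset (hF : 1 ≤ F) (hB : B ⊆ Finset.Icc 1 ((F - 1) / 2)) :
    B.image (F / 2 + ·) ⊆ Finset.Icc 1 F := by
  intro n hn
  obtain ⟨b, hb, rfl⟩ := Finset.mem_image.1 hn
  have := Finset.mem_Icc.1 (hB hb)
  simp only [Finset.mem_Icc]; omega

lemma genus_Phi (hF : 1 ≤ F) (hB : B ⊆ Finset.Icc 1 ((F - 1) / 2)) :
    genus (Phi (F / 2) F B) = F - B.card := by
  rw [genus, compl_Phi hF hB, Set.ncard_coe_finset,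
    Finset.card_sdiff_of_subset (image_subset hF hB), Nat.card_Icc,
    Finset.card_image_of_injective _ (add_right_injective _)]
  omega

lemma frob_Phi (hF : 1 ≤ F) (hB : B ⊆ Finset.Icc 1 ((F - 1) / 2)) :
    frob (Phi (F / 2) F B) = F := by
  rw [frob]
  apply IsGreatest.csSup_eq
  constructor
  · simp only [Set.mem_compl_iff, mem_Phi]
    push_neg
    refine ⟨by omega, ?_, by omega⟩
    intro b hb heq
    have := Finset.mem_Icc.1 (hB hb); omega
  · intro n hn
    simp only [Set.mem_compl_iff, mem_Phi] at hn
    push_neg at hn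
    omega

lemma isNS_Phi (hF : 1 ≤ F) (hB : B ⊆ Finset.Icc 1 ((F - 1) / 2)) :
    IsNumericalSemigroup (Phi (F / 2) F B) := by
  refine ⟨Or.inl rfl, ?_, ?_⟩
  · intro a ha b hb
    rcases eq_or_ne a 0 with rfl | ha0
    · simpa using hb
    rcases eq_or_ne b 0 with rfl | hb0
    · simpa using ha
    have h1 := lb_of_mem hB ha ha0
    have h2 := lb_of_mem hB hb hb0
    exact Or.inr (Or.inr (by omega))
  · rw [compl_Phi hF hB]
    exact Finset.finite_toSet _

lemma mult_Phi (hF : 1 ≤ F) (hB : B ⊆ Finset.Icc 1 ((F - 1) / 2)) :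
    F < 2 * mult (Phi (F / 2) F B) := by
  have h1 : mult (Phi (F / 2) F B) ∈ {n | n ∈ Phi (F / 2) F B ∧ n ≠ 0} := by
    rw [mult, elt]
    simp only [Nat.sub_self]
    rw [Nat.nth_zero]
    apply Nat.sInf_mem
    exact ⟨F + 1, Or.inr (Or.inr (by omega)), by omega⟩
  have := lb_of_mem hB h1.1 h1.2
  omega

lemma elt_Phi (hF : 1 ≤ F) (hB : B ⊆ Finset.Icc 1 ((F - 1) / 2)) {i : ℕ}
    (hi : i < B.card) :
    elt (Phi (F / 2) F B) (i + 1) = F / 2 + Nat.nth (· ∈ B) i := by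
  have hfin : (setOf (· ∈ B)).Finite := B.finite_toSet
  have hcard : hfin.toFinset.card = B.card := by congr 1; ext; simp; exact Iff.rfl
  set b := Nat.nth (· ∈ B) i with hbdef
  have hbB : b ∈ B := Nat.nth_mem_of_lt_card hfin (by exact lt_of_lt_of_eq hi hcard.symm)
  have hcount : Nat.count (· ∈ B) b = i :=
    Nat.count_nth_of_lt_card_finite hfin (by exact lt_of_lt_of_eq hi hcard.symm)
  obtain ⟨hb1, hb2⟩ := Finset.mem_Icc.1 (hB hbB)
  set p : ℕ → Prop := fun n => n ∈ Phi (F / 2) F B ∧ n ≠ 0 with hp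
  have hpx : p (F / 2 + b) := ⟨Or.inr (Or.inl ⟨b, hbB, rfl⟩), by omega⟩
  have hcnt : Nat.count p (F / 2 + b) = i := by
    rw [Nat.count_eq_card_filter_range]
    have himg : (Finset.range (F / 2 + b)).filter p
        = (B.filter (· < b)).image (F / 2 + ·) := by
      ext n
      simp only [Finset.mem_filter, Finset.mem_range, Finset.mem_image, hp, mem_Phi]
      constructor
      · rintro ⟨hlt, (rfl | ⟨b', hb', rfl⟩ | hgtn), h0⟩
        · omega
        · have := Finset.mem_Icc.1 (hB hb')
          exact ⟨b', ⟨hb', by omega⟩, rfl⟩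
        · omega
      · rintro ⟨b', ⟨hb', hlt⟩, rfl⟩
        have := Finset.mem_Icc.1 (hB hb')
        exact ⟨by omega, ⟨Or.inr (Or.inl ⟨b', hb', rfl⟩), by omega⟩⟩
    rw [himg, Finset.card_image_of_injective _ (add_right_injective _)]
    rw [← hcount, Nat.count_eq_card_filter_range]
    congr 1
    ext n
    simp only [Finset.mem_filter, Finset.mem_range]
    tauto
  have hnc := Nat.nth_count (p := p) hpx
  rw [hcnt] at hnc
  rw [elt]
  simpa using hnc

lemma forward {S : Set ℕ} (hF : 1 ≤ F) (hS : IsNumericalSemigroup S)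
    (hfrob : frob S = F) (hmult : F < 2 * mult S) :
    S = Phi (F / 2) F ((Finset.Icc 1 ((F - 1) / 2)).filter (fun b => F / 2 + b ∈ S)) := by
  have hbdd : BddAbove Sᶜ := hS.2.2.bddAbove
  have hne : Sᶜ.Nonempty := by
    by_contra h
    rw [Set.not_nonempty_iff_eq_empty] at h
    rw [frob, h, csSup_empty] at hfrob
    simp only [bot_eq_zero'] at hfrob
    omega
  have hFS : F ∉ S := by
    have : F ∈ Sᶜ := by rw [← hfrob, frob]; exact Nat.sSup_mem hne hbdd
    exact this
  have hgt : ∀ n, F < n → n ∈ S := by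
    intro n hn
    by_contra h
    have h2 := le_csSup hbdd (show n ∈ Sᶜ from h)
    rw [frob] at hfrob
    omega
  have hmle : ∀ n ∈ S, n ≠ 0 → mult S ≤ n := by
    intro n hn h0
    rw [mult, elt]
    simp only [Nat.sub_self]
    rw [Nat.nth_zero]
    exact Nat.sInf_le ⟨hn, h0⟩
  ext n
  simp only [mem_Phi, Finset.mem_filter, Finset.mem_Icc]
  constructor
  · intro hn
    rcases eq_or_ne n 0 with rfl | h0
    · exact Or.inl rfl
    rcases lt_or_ge F n with h | h
    · exact Or.inr (Or.inr h)
    have h1 : mult S ≤ n := hmle n hn h0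
    have hnF : n ≠ F := fun he => hFS (he ▸ hn)
    refine Or.inr (Or.inl ⟨n - F / 2, ⟨⟨by omega, by omega⟩, ?_⟩, by omega⟩)
    rwa [show F / 2 + (n - F / 2) = n by omega]
  · rintro (rfl | ⟨b, ⟨_, hbS⟩, rfl⟩ | h)
    · exact hS.1
    · exact hbS
    · exact hgt n h

open Finset

lemma vandermonde_upper (j : ℕ) : ∀ M r, j ≤ r →
    ∑ a ∈ range (M + 1), a.choose j * ((M - a).choose (r - j)) = (M + 1).choose (r + 1) := by
  intro M
  induction M with
  | zero =>
    intro r hjr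
    rw [show Finset.range (0 + 1) = {0} from rfl, Finset.sum_singleton, Nat.sub_self]
    rcases Nat.eq_zero_or_pos r with rfl | hr
    · obtain rfl : j = 0 := by omega
      rfl
    · rw [Nat.choose_eq_zero_of_lt (show 0 + 1 < r + 1 by omega)]
      rcases Nat.eq_zero_or_pos j with rfl | hj
      · rw [Nat.sub_zero, Nat.choose_eq_zero_of_lt (show 0 < r from hr), Nat.mul_zero]
      · rw [Nat.choose_eq_zero_of_lt (show 0 < j from hj), Nat.zero_mul]
  | succ M ih =>
    intro r hjr
    rcases eq_or_lt_of_le hjr with rfl | hlt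
    · have hc : ∀ a ∈ range (M + 2), a.choose j * ((M + 1 - a).choose (j - j)) = a.choose j := by
        intro a _; simp
      rw [Finset.sum_congr rfl hc]
      rcases le_or_gt j (M + 1) with hle | hgt
      · rw [← Nat.sum_Icc_choose]
        apply (Finset.sum_subset ?_ ?_).symm
        · intro a ha
          rw [Finset.mem_Icc] at ha
          rw [Finset.mem_range]
          omega
        · intro a ha hna
          rw [Finset.mem_range] at ha
          rw [Finset.mem_Icc] at hna
          exact Nat.choose_eq_zero_of_lt (by omega)
      · rw [Nat.choose_eq_zero_of_lt (by omega)]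
        apply Finset.sum_eq_zero
        intro a ha
        rw [Finset.mem_range] at ha
        exact Nat.choose_eq_zero_of_lt (by omega)
    · rw [Finset.sum_range_succ]
      have hz : (M + 1 - (M + 1)).choose (r - j) = 0 := by
        rw [Nat.sub_self]; exact Nat.choose_eq_zero_of_lt (by omega)
      rw [hz, Nat.mul_zero, Nat.add_zero]
      have hsplit : ∀ a ∈ range (M + 1),
          a.choose j * ((M + 1 - a).choose (r - j))
            = a.choose j * ((M - a).choose (r - j))
              + a.choose j * ((M - a).choose (r - 1 - j)) := by
        intro a ha
        rw [Finset.mem_range] at ha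
        have h1 : M + 1 - a = (M - a) + 1 := by omega
        have h2 : r - j = (r - 1 - j) + 1 := by omega
        rw [h1, h2, Nat.choose_succ_succ', Nat.mul_add, ← h2]
        ring
      rw [Finset.sum_congr rfl hsplit, Finset.sum_add_distrib, ih r hjr, ih (r - 1) (by omega)]
      have h3 : (r - 1) + 1 = r := by omega
      rw [h3, Nat.choose_succ_succ' (M + 1) r]
      ring

lemma count_split (s1 s2 : Finset ℕ) (hd : Disjoint s1 s2) {t j : ℕ} (hj : j ≤ t) :
    (((s1 ∪ s2).powersetCard t).filter (fun B => (B ∩ s1).card = j)).card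
      = s1.card.choose j * s2.card.choose (t - j) := by
  rw [← Finset.card_powersetCard, ← Finset.card_powersetCard, ← Finset.card_product]
  apply Finset.card_nbij' (fun B => (B ∩ s1, B ∩ s2)) (fun P => P.1 ∪ P.2)
  · intro B hB
    obtain ⟨hBp, hcard⟩ := Finset.mem_filter.1 hB
    obtain ⟨hsub, hct⟩ := Finset.mem_powersetCard.1 hBp
    have hrec : (B ∩ s1) ∪ (B ∩ s2) = B := by
      rw [← Finset.inter_union_distrib_left, Finset.inter_eq_left.2 hsub]
    have hdij : Disjoint (B ∩ s1) (B ∩ s2) :=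
      hd.mono Finset.inter_subset_right Finset.inter_subset_right
    have hcu : (B ∩ s1).card + (B ∩ s2).card = t := by
      rw [← Finset.card_union_of_disjoint hdij, hrec, hct]
    rw [Finset.mem_coe, Finset.mem_product]
    refine ⟨Finset.mem_powersetCard.2 ⟨Finset.inter_subset_right, hcard⟩,
      Finset.mem_powersetCard.2 ⟨Finset.inter_subset_right, ?_⟩⟩
    show (B ∩ s2).card = t - j
    omega
  · intro P hP
    rw [Finset.mem_coe, Finset.mem_product] at hP
    obtain ⟨h1, h2⟩ := hP
    obtain ⟨h1s, h1c⟩ := Finset.mem_powersetCard.1 h1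
    obtain ⟨h2s, h2c⟩ := Finset.mem_powersetCard.1 h2
    have hdij : Disjoint P.1 P.2 := hd.mono h1s h2s
    have e1 : (P.1 ∪ P.2) ∩ s1 = P.1 := by
      ext a
      simp only [Finset.mem_inter, Finset.mem_union]
      constructor
      · rintro ⟨h | h, ha1⟩
        · exact h
        · exact absurd (h2s h) (Finset.disjoint_left.1 hd ha1)
      · intro h
        exact ⟨Or.inl h, h1s h⟩
    rw [Finset.mem_coe, Finset.mem_filter]
    constructor
    · apply Finset.mem_powersetCard.2
      refine ⟨Finset.union_subset_union h1s h2s, ?_⟩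
      rw [Finset.card_union_of_disjoint hdij, h1c, h2c]
      omega
    · rw [e1, h1c]
  · intro B hB
    obtain ⟨hBp, _⟩ := Finset.mem_filter.1 hB
    obtain ⟨hsub, _⟩ := Finset.mem_powersetCard.1 hBp
    show (B ∩ s1) ∪ (B ∩ s2) = B
    rw [← Finset.inter_union_distrib_left, Finset.inter_eq_left.2 hsub]
  · intro P hP
    rw [Finset.mem_coe, Finset.mem_product] at hP
    obtain ⟨h1, h2⟩ := hP
    obtain ⟨h1s, _⟩ := Finset.mem_powersetCard.1 h1
    obtain ⟨h2s, _⟩ := Finset.mem_powersetCard.1 h2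
    have e1 : (P.1 ∪ P.2) ∩ s1 = P.1 := by
      ext a
      simp only [Finset.mem_inter, Finset.mem_union]
      constructor
      · rintro ⟨h | h, ha1⟩
        · exact h
        · exact absurd (h2s h) (Finset.disjoint_left.1 hd ha1)
      · intro h
        exact ⟨Or.inl h, h1s h⟩
    have e2 : (P.1 ∪ P.2) ∩ s2 = P.2 := by
      ext a
      simp only [Finset.mem_inter, Finset.mem_union]
      constructor
      · rintro ⟨h | h, ha2⟩
        · exact absurd (h1s h) (Finset.disjoint_right.1 hd ha2)
        · exact h
      · intro h
        exact ⟨Or.inr h, h2s h⟩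
    show ((P.1 ∪ P.2) ∩ s1, (P.1 ∪ P.2) ∩ s2) = P
    rw [e1, e2]

lemma le_nth_iff_count_le' {Bp : ℕ → Prop} [DecidablePred Bp] (hfin : (setOf Bp).Finite) {i x : ℕ}
    (hi : i < hfin.toFinset.card) : x ≤ Nat.nth Bp i ↔ Nat.count Bp x ≤ i := by
  constructor
  · exact Nat.le_nth_of_count_le
  · intro h
    by_contra hlt
    push_neg at hlt
    have h1 : Nat.count Bp (Nat.nth Bp i + 1) = i + 1 :=
      Nat.count_nth_succ (fun _ => hi)
    have h2 : Nat.nth Bp i + 1 ≤ x := hlt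
    have h3 := Nat.count_monotone Bp h2
    omega

lemma sum_nth (m t k : ℕ) (hk : 1 ≤ k) (hkt : k ≤ t) (htm : t ≤ m) :
    ∑ B ∈ (Finset.Icc 1 m).powersetCard t, Nat.nth (· ∈ B) (k - 1)
      = k * (m + 1).choose (t + 1) := by
  have key : ∀ B ∈ (Icc 1 m).powersetCard t,
      Nat.nth (· ∈ B) (k - 1)
        = ∑ x ∈ Icc 1 m, if Nat.count (· ∈ B) x ≤ k - 1 then 1 else 0 := by
    intro B hB
    obtain ⟨hsub, hcard⟩ := Finset.mem_powersetCard.1 hB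
    have hfin : (setOf (· ∈ B)).Finite := B.finite_toSet
    have hfeq : hfin.toFinset = B := by ext; simp; exact Iff.rfl
    have hik : k - 1 < hfin.toFinset.card := by rw [hfeq, hcard]; omega
    have hmem : Nat.nth (· ∈ B) (k - 1) ∈ B := Nat.nth_mem_of_lt_card hfin hik
    have hbd := Finset.mem_Icc.1 (hsub hmem)
    have hIcc : (Icc 1 m).filter (fun x => x ≤ Nat.nth (· ∈ B) (k - 1))
        = Icc 1 (Nat.nth (· ∈ B) (k - 1)) := by
      ext x
      simp only [Finset.mem_filter, Finset.mem_Icc]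
      omega
    calc Nat.nth (· ∈ B) (k - 1)
        = ((Icc 1 m).filter (fun x => x ≤ Nat.nth (· ∈ B) (k - 1))).card := by
          rw [hIcc, Nat.card_Icc]; omega
      _ = ∑ x ∈ Icc 1 m, if Nat.count (· ∈ B) x ≤ k - 1 then 1 else 0 := by
          rw [Finset.card_filter]
          apply Finset.sum_congr rfl
          intro x _
          exact if_congr (le_nth_iff_count_le' hfin hik) rfl rfl
  rw [Finset.sum_congr rfl key, Finset.sum_comm]
  have step2 : ∀ x ∈ Icc 1 m,
      (∑ B ∈ (Icc 1 m).powersetCard t, if Nat.count (· ∈ B) x ≤ k - 1 then 1 else 0)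
        = ∑ j ∈ range k, ((x - 1).choose j * (m - x + 1).choose (t - j)) := by
    intro x hx
    obtain ⟨hx1, hx2⟩ := Finset.mem_Icc.1 hx
    have hsplit : ∀ B : Finset ℕ, (if Nat.count (· ∈ B) x ≤ k - 1 then (1 : ℕ) else 0)
        = ∑ j ∈ range k, if Nat.count (· ∈ B) x = j then 1 else 0 := by
      intro B
      rw [Finset.sum_ite_eq (range k) (Nat.count (· ∈ B) x) (fun _ => 1)]
      exact if_congr (by rw [Finset.mem_range]; omega) rfl rfl
    rw [Finset.sum_congr rfl (fun B _ => hsplit B), Finset.sum_comm]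
    apply Finset.sum_congr rfl
    intro j hj
    rw [Finset.mem_range] at hj
    rw [Finset.sum_boole]
    have hunion : Icc 1 m = Icc 1 (x - 1) ∪ Icc x m := by
      ext y
      simp only [Finset.mem_Icc, Finset.mem_union]
      omega
    have hdisj : Disjoint (Icc 1 (x - 1)) (Icc x m) := by
      rw [Finset.disjoint_left]
      intro y hy1 hy2
      rw [Finset.mem_Icc] at hy1 hy2
      omega
    have hfeq2 : ((Icc 1 m).powersetCard t).filter (fun B => Nat.count (· ∈ B) x = j)
        = ((Icc 1 (x - 1) ∪ Icc x m).powersetCard t).filter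
            (fun B => (B ∩ Icc 1 (x - 1)).card = j) := by
      rw [← hunion]
      apply Finset.filter_congr
      intro B hB
      obtain ⟨hsub, _⟩ := Finset.mem_powersetCard.1 hB
      have hcx : Nat.count (· ∈ B) x = (B ∩ Icc 1 (x - 1)).card := by
        rw [Nat.count_eq_card_filter_range]
        congr 1
        ext y
        simp only [Finset.mem_filter, Finset.mem_range, Finset.mem_inter, Finset.mem_Icc]
        constructor
        · rintro ⟨hlt, hyB⟩
          have := Finset.mem_Icc.1 (hsub hyB)
          exact ⟨hyB, by omega, by omega⟩
        · rintro ⟨hyB, hy1, hy2⟩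
          exact ⟨by omega, hyB⟩
      rw [hcx]
    rw [hfeq2, count_split _ _ hdisj (by omega), Nat.card_Icc, Nat.card_Icc]
    simp only [Nat.cast_id]
    congr 2 <;> omega
  rw [Finset.sum_congr rfl step2, Finset.sum_comm]
  have inner : ∀ j ∈ range k,
      (∑ x ∈ Icc 1 m, (x - 1).choose j * ((m - x + 1).choose (t - j)))
        = (m + 1).choose (t + 1) := by
    intro j hj
    rw [Finset.mem_range] at hj
    have hre : ∑ x ∈ Icc 1 m, (x - 1).choose j * ((m - x + 1).choose (t - j))
        = ∑ a ∈ range m, a.choose j * ((m - a).choose (t - j)) := by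
      apply Finset.sum_nbij' (fun x => x - 1) (fun a => a + 1)
      · intro a ha
        rw [Finset.mem_Icc] at ha
        rw [Finset.mem_range]
        omega
      · intro a ha
        rw [Finset.mem_range] at ha
        rw [Finset.mem_Icc]
        omega
      · intro a ha
        rw [Finset.mem_Icc] at ha
        omega
      · intro a _
        omega
      · intro a ha
        rw [Finset.mem_Icc] at ha
        congr 2 <;> omega
    have hV := vandermonde_upper j m t (by omega)
    rw [Finset.sum_range_succ] at hV
    rw [Nat.sub_self, Nat.choose_eq_zero_of_lt (show 0 < t - j by omega), Nat.mul_zero,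
      Nat.add_zero] at hV
    rw [hre, hV]
  rw [Finset.sum_congr rfl inner, Finset.sum_const, Finset.card_range, smul_eq_mul]

end Stmt11

attribute [local instance] Classical.propDecidable

theorem stmt11 (F g k : ℕ) (hk : 1 ≤ k) (hk2 : k + g ≤ F)
    (𝒮 : Set (Set ℕ))
    (h𝒮 : 𝒮 = {S : Set ℕ | IsNumericalSemigroup S ∧ frob S = F ∧ genus S = g ∧
      F < 2 * mult S})
    (hne : 𝒮.Nonempty) :
    𝒮.Finite ∧
    (∑ᶠ S ∈ 𝒮, ((elt S k : ℕ) : ℚ)) / (𝒮.ncard : ℚ)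
      = ((F / 2 : ℕ) : ℚ) + (((((F - 1) / 2 : ℕ)) : ℚ) + 1) * (k : ℚ) / ((F : ℚ) - (g : ℚ) + 1) := by
  obtain ⟨k', rfl⟩ : ∃ k', k = k' + 1 := ⟨k - 1, by omega⟩
  have hF1 : 1 ≤ F := by omega
  have hgF : g ≤ F := by omega
  subst h𝒮
  have hset : {S : Set ℕ | IsNumericalSemigroup S ∧ frob S = F ∧ genus S = g ∧
        F < 2 * mult S}
      = ↑(((Finset.Icc 1 ((F - 1) / 2)).powersetCard (F - g)).image
          (fun B => Stmt11.Phi (F / 2) F B)) := by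
    ext S
    simp only [Set.mem_setOf_eq, Finset.coe_image, Set.mem_image, Finset.mem_coe,
      Finset.mem_powersetCard]
    constructor
    · rintro ⟨hNS, hfrob, hgen, hm⟩
      refine ⟨(Finset.Icc 1 ((F - 1) / 2)).filter (fun b => F / 2 + b ∈ S),
        ⟨Finset.filter_subset _ _, ?_⟩, (Stmt11.forward hF1 hNS hfrob hm).symm⟩
      have hSB := Stmt11.forward hF1 hNS hfrob hm
      have hg2 := Stmt11.genus_Phi hF1
        (Finset.filter_subset (fun b => F / 2 + b ∈ S) (Finset.Icc 1 ((F - 1) / 2)))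
      rw [← hSB, hgen] at hg2
      have hle : ((Finset.Icc 1 ((F - 1) / 2)).filter (fun b => F / 2 + b ∈ S)).card
          ≤ (F - 1) / 2 := by
        calc ((Finset.Icc 1 ((F - 1) / 2)).filter (fun b => F / 2 + b ∈ S)).card
            ≤ (Finset.Icc 1 ((F - 1) / 2)).card := Finset.card_filter_le _ _
          _ = (F - 1) / 2 := by rw [Nat.card_Icc]; omega
      omega
    · rintro ⟨B, ⟨hsub, hcard⟩, rfl⟩
      exact ⟨Stmt11.isNS_Phi hF1 hsub, Stmt11.frob_Phi hF1 hsub,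
        by rw [Stmt11.genus_Phi hF1 hsub, hcard]; omega, Stmt11.mult_Phi hF1 hsub⟩
  have hmono : ∀ B1 B2 : Finset ℕ, B1 ⊆ Finset.Icc 1 ((F - 1) / 2) →
      B2 ⊆ Finset.Icc 1 ((F - 1) / 2) →
      Stmt11.Phi (F / 2) F B1 = Stmt11.Phi (F / 2) F B2 → B1 ⊆ B2 := by
    intro B1 B2 h1 h2 he b hb
    obtain ⟨hb1, hb2⟩ := Finset.mem_Icc.1 (h1 hb)
    have hmem : F / 2 + b ∈ Stmt11.Phi (F / 2) F B2 :=
      he ▸ (Stmt11.mem_Phi.2 (Or.inr (Or.inl ⟨b, hb, rfl⟩)))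
    rcases Stmt11.mem_Phi.1 hmem with h0 | ⟨b', hb', heq⟩ | hgt
    · omega
    · obtain rfl : b = b' := by omega
      exact hb'
    · omega
  have hinj : ∀ B1 ∈ (Finset.Icc 1 ((F - 1) / 2)).powersetCard (F - g),
      ∀ B2 ∈ (Finset.Icc 1 ((F - 1) / 2)).powersetCard (F - g),
      Stmt11.Phi (F / 2) F B1 = Stmt11.Phi (F / 2) F B2 → B1 = B2 := by
    intro B1 hB1 B2 hB2 he
    exact Finset.Subset.antisymm
      (hmono _ _ (Finset.mem_powersetCard.1 hB1).1 (Finset.mem_powersetCard.1 hB2).1 he)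
      (hmono _ _ (Finset.mem_powersetCard.1 hB2).1 (Finset.mem_powersetCard.1 hB1).1 he.symm)
  have htm : F - g ≤ (F - 1) / 2 := by
    obtain ⟨S0, hS0⟩ := hne
    rw [hset] at hS0
    obtain ⟨B0, hB0, _⟩ := Finset.mem_image.1 (Finset.mem_coe.1 hS0)
    obtain ⟨hsub0, hcard0⟩ := Finset.mem_powersetCard.1 hB0
    have := Finset.card_le_card hsub0
    rw [hcard0, Nat.card_Icc] at this
    omega
  have hcard𝒜 : ((Finset.Icc 1 ((F - 1) / 2)).powersetCard (F - g)).card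
      = ((F - 1) / 2).choose (F - g) := by
    rw [Finset.card_powersetCard, Nat.card_Icc]
    congr 1
  refine ⟨by rw [hset]; exact Finset.finite_toSet _, ?_⟩
  rw [hset, Set.ncard_coe_finset,
    Finset.card_image_of_injOn (fun B1 hB1 B2 hB2 he =>
      hinj B1 (Finset.mem_coe.1 hB1) B2 (Finset.mem_coe.1 hB2) he),
    hcard𝒜, finsum_mem_coe_finset, Finset.sum_image hinj]
  have hcong : ∀ B ∈ (Finset.Icc 1 ((F - 1) / 2)).powersetCard (F - g),
      ((elt (Stmt11.Phi (F / 2) F B) (k' + 1) : ℕ) : ℚ)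
        = ((F / 2 + Nat.nth (· ∈ B) k' : ℕ) : ℚ) := by
    intro B hB
    obtain ⟨hsub, hcard⟩ := Finset.mem_powersetCard.1 hB
    rw [Stmt11.elt_Phi hF1 hsub (by omega : k' < B.card)]
  rw [Finset.sum_congr rfl hcong, ← Nat.cast_sum]
  have hsumN : ∑ B ∈ (Finset.Icc 1 ((F - 1) / 2)).powersetCard (F - g),
      (F / 2 + Nat.nth (· ∈ B) k')
        = ((F - 1) / 2).choose (F - g) * (F / 2)
          + (k' + 1) * ((F - 1) / 2 + 1).choose ((F - g) + 1) := by
    rw [Finset.sum_add_distrib, Finset.sum_const, smul_eq_mul, hcard𝒜]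
    have hsn := Stmt11.sum_nth ((F - 1) / 2) (F - g) (k' + 1) (by omega) (by omega) htm
    simp only [Nat.add_sub_cancel] at hsn
    rw [hsn]
  rw [hsumN]
  have hCpos : 0 < ((F - 1) / 2).choose (F - g) := Nat.choose_pos htm
  have hID : ((F - 1) / 2 + 1) * ((F - 1) / 2).choose (F - g)
      = ((F - 1) / 2 + 1).choose ((F - g) + 1) * ((F - g) + 1) :=
    Nat.add_one_mul_choose_eq _ _
  have hfg : ((F : ℚ) - (g : ℚ) + 1) = ((F - g : ℕ) : ℚ) + 1 := by
    rw [Nat.cast_sub hgF]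
  have hIDq : ((((F - 1) / 2 : ℕ) : ℚ) + 1) * ((((F - 1) / 2).choose (F - g) : ℕ) : ℚ)
      = ((((F - 1) / 2 + 1).choose ((F - g) + 1) : ℕ) : ℚ) * (((F - g : ℕ) : ℚ) + 1) := by
    exact_mod_cast hID
  have hC0 : ((((F - 1) / 2).choose (F - g) : ℕ) : ℚ) ≠ 0 := by
    exact_mod_cast hCpos.ne'
  have ht0 : ((F - g : ℕ) : ℚ) + 1 ≠ 0 := by positivity
  rw [hfg]
  clear hfg hgF hk2 hID
  push_cast
  field_simp
  linear_combination (-((k' : ℚ) + 1)) * hIDq
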